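/- Let λ be a nonempty Young diagram, let N ≥ |λ|, let 0 ≤ k ≤ N, and let S be an N⟨k⟩-standard set-valued pre-tableau of shape λ. Then there exists an N-standard set-valued tableau T of shape λ with S(r,c) ⊆ T(r,c) for every cell (r,c) ∈ λ; that is, f^{λ,N,S} ≥ 1. -/
import Mathlib


open Finset

/-- A Young diagram: a finite set of cells `(r,c)` with `r,c ≥ 1`, closed under
moving weakly north and west (staying in the positive quadrant). -/
def IsYoung (μ : Finset (ℕ × ℕ)) : Prop :=
  ∀ p ∈ μ, 1 ≤ p.1 ∧ 1 ≤ p.2 ∧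
    ∀ r' c' : ℕ, 1 ≤ r' → r' ≤ p.1 → 1 ≤ c' → c' ≤ p.2 → (r', c') ∈ μ

/-- The staircase `δ^k = {(r,c) : r,c ≥ 1, r + c ≤ k + 1}`. -/
def staircase (k : ℕ) : Finset (ℕ × ℕ) :=
  (Finset.Icc 1 k ×ˢ Finset.Icc 1 k).filter (fun p => p.1 + p.2 ≤ k + 1)

/-- `sv μ` is the largest `k` with `staircase k ⊆ μ` (it is `0` for `μ = ∅`). -/
def sv (μ : Finset (ℕ × ℕ)) : ℕ :=
  Nat.findGreatest (fun k => staircase k ⊆ μ) μ.card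

/-- The cells of `A` that are the unique element of `A` weakly northwest of themselves. -/
def NW (A : Finset (ℕ × ℕ)) : Finset (ℕ × ℕ) :=
  A.filter (fun p => ∀ q ∈ A, q.1 ≤ p.1 → q.2 ≤ p.2 → q = p)

/-- The hook of a cell `p` in `μ`. -/
def hook (μ : Finset (ℕ × ℕ)) (p : ℕ × ℕ) : Finset (ℕ × ℕ) :=
  μ.filter (fun q => (q.1 = p.1 ∧ p.2 < q.2) ∨ (q.2 = p.2 ∧ p.1 < q.1))

/-- The maximum of a finite set of naturals (`0` for the empty set). -/
def maxv (s : Finset ℕ) : ℕ := s.sup id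

/-- An `N⟨k⟩`-standard set-valued pre-tableau of shape `μ`. -/
structure IsPreSVT (μ : Finset (ℕ × ℕ)) (N k : ℕ) (S : ℕ × ℕ → Finset ℕ) : Prop where
  support : ∀ p, p ∉ μ → S p = ∅
  subset : ∀ p ∈ μ, S p ⊆ Finset.Icc (k + 1) N
  exactlyOnce : ∀ i ∈ Finset.Icc (k + 1) N, ∃! p, p ∈ μ ∧ i ∈ S p
  down_ne : ∀ r c : ℕ, (r, c) ∈ μ → (r + 1, c) ∈ μ →
    (S (r, c)).Nonempty → (S (r + 1, c)).Nonempty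
  right_ne : ∀ r c : ℕ, (r, c) ∈ μ → (r, c + 1) ∈ μ →
    (S (r, c)).Nonempty → (S (r, c + 1)).Nonempty
  down_lt : ∀ r c : ℕ, (r, c) ∈ μ → (r + 1, c) ∈ μ →
    ∀ a ∈ S (r, c), ∀ b ∈ S (r + 1, c), a < b
  right_lt : ∀ r c : ℕ, (r, c) ∈ μ → (r, c + 1) ∈ μ →
    ∀ a ∈ S (r, c), ∀ b ∈ S (r, c + 1), a < b
  empties : (μ.filter (fun p => S p = ∅)).card ≤ k

/-- An `N`-standard set-valued tableau of shape `μ`: every cell gets a nonempty set,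
each value `1,…,N` appears exactly once, rows and columns are strictly increasing. -/
def IsSVT (μ : Finset (ℕ × ℕ)) (N : ℕ) (T : ℕ × ℕ → Finset ℕ) : Prop :=
  IsPreSVT μ N 0 T

/-- The set of `N`-standard set-valued tableaux of shape `μ` containing `S`. -/
def SVTset (μ : Finset (ℕ × ℕ)) (N : ℕ) (S : ℕ × ℕ → Finset ℕ) :
    Set (ℕ × ℕ → Finset ℕ) :=
  {T | IsSVT μ N T ∧ ∀ p, S p ⊆ T p}

/-- `f^{μ,N,S}`, the number of `N`-standard set-valued tableaux of shape `μ` containing `S`. -/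
noncomputable def fSVT (μ : Finset (ℕ × ℕ)) (N : ℕ) (S : ℕ × ℕ → Finset ℕ) : ℕ :=
  (SVTset μ N S).ncard

/-- `f^{μ,N}`, the number of `N`-standard set-valued tableaux of shape `μ`. -/
noncomputable def fSVTall (μ : Finset (ℕ × ℕ)) (N : ℕ) : ℕ :=
  {T : ℕ × ℕ → Finset ℕ | IsSVT μ N T}.ncard

/-- A standard Young tableau of shape `μ`: a bijection from the cells of `μ`
to `{1,…,|μ|}` increasing along rows and columns (valued `0` off `μ`). -/
structure IsSYT (μ : Finset (ℕ × ℕ)) (F : ℕ × ℕ → ℕ) : Prop where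
  support : ∀ p, p ∉ μ → F p = 0
  mem_range : ∀ p ∈ μ, F p ∈ Finset.Icc 1 μ.card
  exactlyOnce : ∀ i ∈ Finset.Icc 1 μ.card, ∃! p, p ∈ μ ∧ F p = i
  down_lt : ∀ r c : ℕ, (r, c) ∈ μ → (r + 1, c) ∈ μ → F (r, c) < F (r + 1, c)
  right_lt : ∀ r c : ℕ, (r, c) ∈ μ → (r, c + 1) ∈ μ → F (r, c) < F (r, c + 1)

/-- `f^μ`, the number of standard Young tableaux of shape `μ`. -/
noncomputable def fSYT (μ : Finset (ℕ × ℕ)) : ℕ :=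
  {F : ℕ × ℕ → ℕ | IsSYT μ F}.ncard

/-- Lexicographic order on cells (auxiliary). -/
def lexLE (p q : ℕ × ℕ) : Prop := p.1 < q.1 ∨ (p.1 = q.1 ∧ p.2 ≤ q.2)

instance : DecidableRel lexLE := fun p q => by unfold lexLE; infer_instance

lemma lexLE_refl (p : ℕ × ℕ) : lexLE p p := Or.inr ⟨rfl, le_rfl⟩

lemma lexLE_trans {r p q : ℕ × ℕ} (h1 : lexLE r p) (h2 : lexLE p q) : lexLE r q := by
  unfold lexLE at *; omega

lemma lexLE_tri {p q : ℕ × ℕ} (h : p ≠ q) :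
    (lexLE p q ∧ ¬ lexLE q p) ∨ (lexLE q p ∧ ¬ lexLE p q) := by
  have h' : ¬(p.1 = q.1 ∧ p.2 = q.2) := by
    intro hc; exact h (Prod.ext hc.1 hc.2)
  unfold lexLE; omega

/-- The empty cells of the pre-tableau other than `(1,1)` (auxiliary). -/
def Ecells (lam : Finset (ℕ × ℕ)) (S : ℕ × ℕ → Finset ℕ) : Finset (ℕ × ℕ) :=
  (lam.filter (fun p => S p = ∅)).erase (1, 1)

/-- The lexicographic rank of a cell among `Ecells` (auxiliary). -/
def idxE (lam : Finset (ℕ × ℕ)) (S : ℕ × ℕ → Finset ℕ) (q : ℕ × ℕ) : ℕ :=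
  ((Ecells lam S).filter (fun r => lexLE r q)).card

lemma idxE_lt (lam : Finset (ℕ × ℕ)) (S : ℕ × ℕ → Finset ℕ) {p q : ℕ × ℕ}
    (hq : q ∈ Ecells lam S) (h1 : lexLE p q) (h2 : ¬ lexLE q p) :
    idxE lam S p < idxE lam S q := by
  apply Finset.card_lt_card
  have hsub : (Ecells lam S).filter (fun r => lexLE r p) ⊆
      (Ecells lam S).filter (fun r => lexLE r q) := by
    intro r hr
    rw [Finset.mem_filter] at hr ⊢
    exact ⟨hr.1, lexLE_trans hr.2 h1⟩
  rw [Finset.ssubset_iff_of_subset hsub]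
  exact ⟨q, Finset.mem_filter.mpr ⟨hq, lexLE_refl q⟩,
    fun hc => h2 (Finset.mem_filter.mp hc).2⟩

/-- Every `N⟨k⟩`-standard set-valued pre-tableau of shape `λ` extends
to an `N`-standard set-valued tableau; that is, `f^{λ,N,S} ≥ 1`. -/
theorem pretableau_extends (lam : Finset (ℕ × ℕ)) (hY : IsYoung lam)
    (hne : lam.Nonempty) (N k : ℕ) (hN : lam.card ≤ N) (hk : k ≤ N)
    (S : ℕ × ℕ → Finset ℕ) (hS : IsPreSVT lam N k S) :
    (∃ T : ℕ × ℕ → Finset ℕ, IsSVT lam N T ∧ ∀ p, S p ⊆ T p) ∧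
    1 ≤ fSVT lam N S := by
  classical
  obtain ⟨p0, hp0⟩ := hne
  obtain ⟨hp01, hp02, hclose⟩ := hY p0 hp0
  have h11 : ((1, 1) : ℕ × ℕ) ∈ lam := hclose 1 1 le_rfl hp01 le_rfl hp02
  set E : Finset (ℕ × ℕ) := lam.filter (fun p => S p = ∅) with hE
  have hEk : E.card ≤ k := hS.empties
  set E' : Finset (ℕ × ℕ) := Ecells lam S with hE'def
  have hE'E : E' = E.erase (1, 1) := rfl
  set m : ℕ := E'.card with hm
  have hmk : m ≤ k := by
    rw [hm, hE'E]; exact le_trans Finset.card_erase_le hEk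
  have hE'mem : ∀ q ∈ E', q ∈ lam ∧ S q = ∅ ∧ q ≠ (1, 1) := by
    intro q hq
    rw [hE'E, Finset.mem_erase, hE, Finset.mem_filter] at hq
    exact ⟨hq.2.1, hq.2.2, hq.1⟩
  have hidx1 : ∀ q ∈ E', 1 ≤ idxE lam S q := by
    intro q hq
    have hq' : q ∈ (Ecells lam S).filter (fun r => lexLE r q) :=
      Finset.mem_filter.mpr ⟨hq, lexLE_refl q⟩
    exact Finset.card_pos.mpr ⟨q, hq'⟩
  have hidxm : ∀ q ∈ E', idxE lam S q ≤ m := by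
    intro q _
    exact Finset.card_le_card (Finset.filter_subset _ _)
  have hinj : ∀ p ∈ E', ∀ q ∈ E', idxE lam S p = idxE lam S q → p = q := by
    intro p hp q hq hpq
    by_contra hne'
    rcases lexLE_tri hne' with ⟨h1, h2⟩ | ⟨h1, h2⟩
    · exact absurd hpq (Nat.ne_of_lt (idxE_lt lam S hq h1 h2))
    · exact absurd hpq.symm (Nat.ne_of_lt (idxE_lt lam S hp h1 h2))
  have hsurj : ∀ j, 1 ≤ j → j ≤ m → ∃ q ∈ E', idxE lam S q = j := by
    have himg : E'.image (idxE lam S) = Finset.Icc 1 m := by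
      apply Finset.eq_of_subset_of_card_le
      · intro j hj
        rw [Finset.mem_image] at hj
        obtain ⟨q, hq, rfl⟩ := hj
        rw [Finset.mem_Icc]
        exact ⟨hidx1 q hq, hidxm q hq⟩
      · rw [Nat.card_Icc, Finset.card_image_of_injOn (fun p hp q hq => hinj p hp q hq)]
        omega
    intro j h1 h2
    have hj : j ∈ E'.image (idxE lam S) := by
      rw [himg, Finset.mem_Icc]; exact ⟨h1, h2⟩
    rw [Finset.mem_image] at hj
    obtain ⟨q, hq, hqj⟩ := hj
    exact ⟨q, hq, hqj⟩
  -- the new values added to each cell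
  set A : ℕ × ℕ → Finset ℕ := fun p =>
    if p = (1, 1) then Finset.Icc 1 (k - m)
    else if p ∈ E' then {k - m + idxE lam S p} else ∅ with hA
  set T : ℕ × ℕ → Finset ℕ := fun p => S p ∪ A p with hT'
  have hAIcc : ∀ p, A p ⊆ Finset.Icc 1 k := by
    intro p x hx
    simp only [hA] at hx
    split_ifs at hx with h1 h2
    · rw [Finset.mem_Icc] at hx ⊢; omega
    · rw [Finset.mem_singleton] at hx
      have i1 := hidx1 p h2
      have i2 := hidxm p h2
      rw [Finset.mem_Icc]; omega
    · simp at hx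
  have hSlow : ∀ p, ∀ x ∈ S p, k + 1 ≤ x := by
    intro p x hx
    by_cases hp : p ∈ lam
    · exact (Finset.mem_Icc.mp (hS.subset p hp hx)).1
    · rw [hS.support p hp] at hx; simp at hx
  have hAoff : ∀ p, p ∉ lam → A p = ∅ := by
    intro p hp
    have h1 : p ≠ (1, 1) := fun hc => hp (hc ▸ h11)
    have h2 : p ∉ E' := fun hc => hp (hE'mem p hc).1
    simp only [hA]; rw [if_neg h1, if_neg h2]
  have hTne : ∀ p ∈ lam, (T p).Nonempty := by
    intro p hp
    rcases Finset.eq_empty_or_nonempty (S p) with hSp | hSp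
    · by_cases h1 : p = (1, 1)
      · have hmemE : ((1, 1) : ℕ × ℕ) ∈ E := by
          rw [hE, Finset.mem_filter]; exact ⟨h11, h1 ▸ hSp⟩
        have hcard : m = E.card - 1 := by
          rw [hm, hE'E, Finset.card_erase_of_mem hmemE]
        have hEpos : 1 ≤ E.card := Finset.card_pos.mpr ⟨_, hmemE⟩
        refine ⟨1, Finset.mem_union_right _ ?_⟩
        simp only [hA]
        rw [if_pos h1, Finset.mem_Icc]
        omega
      · have hpE' : p ∈ E' := by
          rw [hE'E, Finset.mem_erase, hE, Finset.mem_filter]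
          exact ⟨h1, hp, hSp⟩
        refine ⟨k - m + idxE lam S p, Finset.mem_union_right _ ?_⟩
        simp only [hA]
        rw [if_neg h1, if_pos hpE']
        exact Finset.mem_singleton_self _
    · obtain ⟨x, hx⟩ := hSp
      exact ⟨x, Finset.mem_union_left _ hx⟩
  have hstep : ∀ p q : ℕ × ℕ, p ∈ lam → q ∈ lam →
      (∀ a ∈ S p, ∀ b ∈ S q, a < b) → ((S p).Nonempty → (S q).Nonempty) →
      lexLE p q → ¬ lexLE q p → q ≠ (1, 1) →
      ∀ a ∈ T p, ∀ b ∈ T q, a < b := by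
    intro p q hp hq hSlt hSne hl1 hl2 hq1 a ha b hb
    simp only [hT', Finset.mem_union] at ha hb
    rcases hb with hb | hb
    · rcases ha with ha | ha
      · exact hSlt a ha b hb
      · have h1 := (Finset.mem_Icc.mp (hAIcc p ha)).2
        have h2 := hSlow q b hb
        omega
    · have hqE' : q ∈ E' := by
        by_contra hc
        simp only [hA] at hb
        rw [if_neg hq1, if_neg hc] at hb
        simp at hb
      have hSq : S q = ∅ := (hE'mem q hqE').2.1
      have hbval : b = k - m + idxE lam S q := by
        simp only [hA] at hb
        rw [if_neg hq1, if_pos hqE', Finset.mem_singleton] at hb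
        exact hb
      rcases ha with ha | ha
      · have := hSne ⟨a, ha⟩
        rw [hSq] at this
        exact absurd this Finset.not_nonempty_empty
      · simp only [hA] at ha
        split_ifs at ha with h1 h2
        · have h3 := (Finset.mem_Icc.mp ha).2
          have h4 := hidx1 q hqE'
          omega
        · rw [Finset.mem_singleton] at ha
          have h5 := idxE_lt lam S hqE' hl1 hl2
          omega
        · simp at ha
  have hAval : ∀ p, ∀ x ∈ A p, x ≤ k := fun p x hx => (Finset.mem_Icc.mp (hAIcc p hx)).2
  have hEO : ∀ i ∈ Finset.Icc (0 + 1) N, ∃! p, p ∈ lam ∧ i ∈ T p := by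
    intro i hi
    rw [Finset.mem_Icc] at hi
    by_cases hik : i ≤ k
    · have hnotS : ∀ p, i ∉ S p := fun p hc => by have := hSlow p i hc; omega
      by_cases him : i ≤ k - m
      · refine ⟨(1, 1), ⟨h11, Finset.mem_union_right _ ?_⟩, ?_⟩
        · simp only [hA, if_true, eq_self_iff_true, Finset.mem_Icc]
          omega
        · rintro p ⟨hp, hip⟩
          simp only [hT', Finset.mem_union] at hip
          rcases hip with h | h
          · exact absurd h (hnotS p)
          · simp only [hA] at h
            split_ifs at h with h1 h2
            · exact h1
            · rw [Finset.mem_singleton] at h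
              have := hidx1 p h2
              omega
            · simp at h
      · obtain ⟨q, hqE', hqj⟩ := hsurj (i - (k - m)) (by omega) (by omega)
        have hq1 : q ≠ (1, 1) := (hE'mem q hqE').2.2
        have hiq : i ∈ A q := by
          simp only [hA]
          rw [if_neg hq1, if_pos hqE', Finset.mem_singleton]
          omega
        refine ⟨q, ⟨(hE'mem q hqE').1, Finset.mem_union_right _ hiq⟩, ?_⟩
        rintro p ⟨hp, hip⟩
        simp only [hT', Finset.mem_union] at hip
        rcases hip with h | h
        · exact absurd h (hnotS p)
        · simp only [hA] at h
          split_ifs at h with h1 h2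
          · rw [Finset.mem_Icc] at h; omega
          · rw [Finset.mem_singleton] at h
            exact hinj p h2 q hqE' (by omega)
          · simp at h
    · have hik' : k + 1 ≤ i := by omega
      obtain ⟨q, ⟨hq, hiq⟩, huniq⟩ := hS.exactlyOnce i (Finset.mem_Icc.mpr ⟨hik', hi.2⟩)
      refine ⟨q, ⟨hq, Finset.mem_union_left _ hiq⟩, ?_⟩
      rintro p ⟨hp, hip⟩
      simp only [hT', Finset.mem_union] at hip
      rcases hip with h | h
      · exact huniq p ⟨hp, h⟩
      · have := hAval p i h; omega
  have hTsvt : IsPreSVT lam N 0 T := by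
    refine ⟨?_, ?_, hEO, ?_, ?_, ?_, ?_, ?_⟩
    · intro p hp
      simp only [hT']
      rw [hS.support p hp, hAoff p hp]
      simp
    · intro p hp x hx
      simp only [hT', Finset.mem_union] at hx
      rw [Finset.mem_Icc]
      rcases hx with h | h
      · have h1 := hSlow p x h
        have h2 := (Finset.mem_Icc.mp (hS.subset p hp h)).2
        omega
      · have := Finset.mem_Icc.mp (hAIcc p h)
        omega
    · intro r c h1 h2 _
      exact hTne _ h2
    · intro r c h1 h2 _
      exact hTne _ h2
    · intro r c h1 h2
      have hr1 : 1 ≤ r := (hY (r, c) h1).1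
      exact hstep (r, c) (r + 1, c) h1 h2 (hS.down_lt r c h1 h2) (hS.down_ne r c h1 h2)
        (Or.inl (by omega))
        (show ¬(r + 1 < r ∨ (r + 1 = r ∧ c ≤ c)) by omega)
        (fun hc => by
          have : r + 1 = 1 := congrArg Prod.fst hc
          omega)
    · intro r c h1 h2
      have hc1 : 1 ≤ c := (hY (r, c) h1).2.1
      exact hstep (r, c) (r, c + 1) h1 h2 (hS.right_lt r c h1 h2) (hS.right_ne r c h1 h2)
        (Or.inr ⟨rfl, by omega⟩)
        (show ¬(r < r ∨ (r = r ∧ c + 1 ≤ c)) by omega)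
        (fun hc => by
          have : c + 1 = 1 := congrArg Prod.snd hc
          omega)
    · have hfe : lam.filter (fun p => T p = ∅) = ∅ := by
        rw [Finset.filter_eq_empty_iff]
        intro p hp
        exact (hTne p hp).ne_empty
      rw [hfe]
      simp
  have hTin : T ∈ SVTset lam N S := ⟨hTsvt, fun p => Finset.subset_union_left⟩
  have hfin : (SVTset lam N S).Finite := by
    have hsub : SVTset lam N S ⊆
        (fun (g : {x // x ∈ lam} → {s // s ∈ (Finset.Icc 1 N).powerset}) (p : ℕ × ℕ) =>
          if h : p ∈ lam then (g ⟨p, h⟩ : Finset ℕ) else ∅) '' Set.univ := by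
      intro F hF
      refine ⟨fun p => ⟨F p, Finset.mem_powerset.mpr (IsPreSVT.subset hF.1 p p.2)⟩,
        Set.mem_univ _, ?_⟩
      funext p
      by_cases h : p ∈ lam
      · simp [h]
      · simp [h, IsPreSVT.support hF.1 p h]
    exact Set.Finite.subset (Set.finite_univ.image _) hsub
  exact ⟨⟨T, hTsvt, fun p => Finset.subset_union_left⟩,
    (Set.ncard_pos hfin).mpr ⟨T, hTin⟩⟩
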